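/- arXiv:1701.01461 — 8 statements merged into one kernel-verified Lean document; each statement's English description precedes it below -/
import Mathlib

section
/- Let H be a hypergraph with a β-elimination order < on its vertices, and let <_H be the induced lexicographic order on edges (e <_H f iff max(e Δ f) ∈ f, where Δ is symmetric difference and max is with respect to <). If e, f ∈ H share a vertex x and e <_H f, then e ∩ {y : y ≥ x} ⊆ f. -/
variable {V : Type*} [LinearOrder V]

/-- The colexicographic order on edges: `e <_H f` iff `max (e Δ f) ∈ f`. -/
def edgeLT (e f : Finset V) : Prop :=
  ∃ hne : (symmDiff e f).Nonempty, (symmDiff e f).max' hne ∈ f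

def edgeLE (e f : Finset V) : Prop := e = f ∨ edgeLT e f

/-- The linear order on `V` is a β-elimination order for the hypergraph `H`. -/
def IsBetaElim (H : Finset (Finset V)) : Prop :=
  ∀ x : V, ∀ e ∈ H, ∀ f ∈ H, x ∈ e → x ∈ f →
    (e.filter fun y => x < y) ⊆ f ∨ (f.filter fun y => x < y) ⊆ e

/-- A walk starting at edge `e` and continuing through the vertex/edge pairs in `p`. -/
def WalkAux (H : Finset (Finset V)) : Finset V → List (V × Finset V) → Prop
  | _, [] => True
  | e, (x, f) :: p => x ∈ e ∧ x ∈ f ∧ f ∈ H ∧ WalkAux H f p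

def lastEdge (e : Finset V) (p : List (V × Finset V)) : Finset V :=
  (p.map Prod.snd).getLastD e

/-- `p` is a walk from edge `e` to edge `f` in `H`. -/
def IsWalk (H : Finset (Finset V)) (e f : Finset V) (p : List (V × Finset V)) : Prop :=
  e ∈ H ∧ WalkAux H e p ∧ lastEdge e p = f

/-- A path: a walk with pairwise distinct edges and pairwise distinct vertices. -/
def IsPath (H : Finset (Finset V)) (e f : Finset V) (p : List (V × Finset V)) : Prop :=
  IsWalk H e f p ∧ (e :: p.map Prod.snd).Nodup ∧ (p.map Prod.fst).Nodup

/-- `f ∈ H_e^x`: there is a walk from `f` to `e` using only edges `≤_H e` and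
vertices `≤ x`. -/
def memHex (H : Finset (Finset V)) (e : Finset V) (x : V) (f : Finset V) : Prop :=
  ∃ p, IsWalk H f e p ∧ edgeLE f e ∧ ∀ q ∈ p, edgeLE q.2 e ∧ q.1 ≤ x

theorem ordervar {V : Type*} [LinearOrder V] (H : Finset (Finset V))
    (hβ : IsBetaElim H) (e f : Finset V) (he : e ∈ H) (hf : f ∈ H)
    (x : V) (hxe : x ∈ e) (hxf : x ∈ f) (hef : edgeLT e f) :
    (e.filter fun y => x ≤ y) ⊆ f := by
  intro y hy
  simp only [Finset.mem_filter] at hy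
  obtain ⟨hye, hxy⟩ := hy
  rcases eq_or_lt_of_le hxy with rfl | hlt
  · exact hxf
  by_contra hyf
  rcases hβ x e he f hf hxe hxf with h | h
  · exact hyf (h (Finset.mem_filter.mpr ⟨hye, hlt⟩))
  · obtain ⟨hne, hm⟩ := hef
    set m := (symmDiff e f).max' hne with hmdef
    have hmsd : m ∈ symmDiff e f := Finset.max'_mem _ hne
    rw [Finset.mem_symmDiff] at hmsd
    have hme : m ∉ e := by
      rcases hmsd with ⟨_, h2⟩ | ⟨_, h2⟩
      · exact absurd hm h2
      · exact h2
    have hysd : y ∈ symmDiff e f := Finset.mem_symmDiff.mpr (Or.inl ⟨hye, hyf⟩)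
    have hym : y ≤ m := Finset.le_max' _ y hysd
    exact hme (h (Finset.mem_filter.mpr ⟨hm, lt_of_lt_of_le hlt hym⟩))
end

section
/- Let H be a hypergraph with β-elimination order < and induced edge order <_H. If P = (e_0, x_0, e_1, x_1, ..., e_n) is a decreasing path (i.e., e_i >_H e_{i+1} and x_i > x_{i+1} for all i), then e_n ∩ {y : y ≥ x_0} ⊆ e_0. -/
variable {V : Type*} [LinearOrder V]

lemma key_step {H : Finset (Finset V)} (hβ : IsBetaElim H)
    {e e1 : Finset V} (he : e ∈ H) (he1 : e1 ∈ H) {x0 : V}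
    (hx0e : x0 ∈ e) (hx0e1 : x0 ∈ e1) (hlt : edgeLT e1 e) :
    ∀ y ∈ e1, x0 ≤ y → y ∈ e := by
  intro y hy hxy
  rcases eq_or_lt_of_le hxy with rfl | hxy
  · exact hx0e
  rcases hβ x0 e he e1 he1 hx0e hx0e1 with h | h
  · by_contra hye
    obtain ⟨hne, hmax⟩ := hlt
    have hysd : y ∈ symmDiff e1 e := by
      rw [Finset.mem_symmDiff]; exact Or.inl ⟨hy, hye⟩
    have hle : y ≤ (symmDiff e1 e).max' hne := Finset.le_max' _ _ hysd
    have hmsd : (symmDiff e1 e).max' hne ∈ symmDiff e1 e := Finset.max'_mem _ _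
    rw [Finset.mem_symmDiff] at hmsd
    have hmne1 : (symmDiff e1 e).max' hne ∉ e1 := by
      rcases hmsd with ⟨_, h2⟩ | ⟨_, h2⟩
      · exact absurd hmax h2
      · exact h2
    exact hmne1 (h (Finset.mem_filter.mpr ⟨hmax, lt_of_lt_of_le hxy hle⟩))
  · exact h (Finset.mem_filter.mpr ⟨hy, hxy⟩)

lemma decreasing_walk_aux {H : Finset (Finset V)} (hβ : IsBetaElim H) :
    ∀ (rest : List (V × Finset V)) (e : Finset V) (x0 : V) (e1 : Finset V),
      e ∈ H → WalkAux H e ((x0, e1) :: rest) →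
      List.Chain' (fun a b => edgeLT b a) (e :: e1 :: rest.map Prod.snd) →
      List.Chain' (fun a b => b < a) (x0 :: rest.map Prod.fst) →
      ((lastEdge e ((x0, e1) :: rest)).filter fun y => x0 ≤ y) ⊆ e := by
  intro rest
  induction rest with
  | nil =>
    intro e x0 e1 he hw hcE hcV
    obtain ⟨hx0e, hx0e1, he1, -⟩ := hw
    have hlt : edgeLT e1 e := (List.isChain_cons_cons.mp hcE).1
    intro y hy
    rw [Finset.mem_filter] at hy
    have : lastEdge e [(x0, e1)] = e1 := by simp [lastEdge]
    rw [this] at hy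
    exact key_step hβ he he1 hx0e hx0e1 hlt y hy.1 hy.2
  | cons p rest ih =>
    obtain ⟨x1, e2⟩ := p
    intro e x0 e1 he hw hcE hcV
    obtain ⟨hx0e, hx0e1, he1, hw'⟩ := hw
    have hlt : edgeLT e1 e := (List.isChain_cons_cons.mp hcE).1
    have hcE' := (List.isChain_cons_cons.mp hcE).2
    have hx1 : x1 < x0 := (List.isChain_cons_cons.mp hcV).1
    have hcV' := (List.isChain_cons_cons.mp hcV).2
    have hlast : lastEdge e ((x0, e1) :: (x1, e2) :: rest)
        = lastEdge e1 ((x1, e2) :: rest) := by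
      simp only [lastEdge, List.map_cons, List.getLastD_cons]
    have hsub := ih e1 x1 e2 he1 hw' hcE' hcV'
    intro y hy
    rw [Finset.mem_filter, hlast] at hy
    have hye1 : y ∈ e1 := hsub (Finset.mem_filter.mpr ⟨hy.1, le_of_lt (lt_of_lt_of_le hx1 hy.2)⟩)
    exact key_step hβ he he1 hx0e hx0e1 hlt y hye1 hy.2

theorem decreasing_path_inclusion {V : Type*} [LinearOrder V] (H : Finset (Finset V))
    (hβ : IsBetaElim H) (e f : Finset V) (x0 : V) (e1 : Finset V)
    (rest : List (V × Finset V))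
    (hpath : IsPath H e f ((x0, e1) :: rest))
    (hdecE : List.Chain' (fun a b => edgeLT b a) (e :: ((x0, e1) :: rest).map Prod.snd))
    (hdecV : List.Chain' (fun a b => b < a) (((x0, e1) :: rest).map Prod.fst)) :
    (f.filter fun y => x0 ≤ y) ⊆ e := by
  obtain ⟨⟨he, hw, hlast⟩, -, -⟩ := hpath
  subst hlast
  exact decreasing_walk_aux hβ rest e x0 e1 he hw hdecE hdecV
end

section
/- Let H be a β-acyclic hypergraph with β-elimination order <, edge order <_H, and for x ∈ V(H), e ∈ H let H_e^x be the set of edges f ∈ H such that there is a walk from f to e using only edges ≤_H e and vertices ≤ x. Then for every vertex x and edge e, every vertex of H_e^x that is ≥ x belongs to e, i.e., V(H_e^x) ∩ {y : y ≥ x} ⊆ e. -/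
variable {V : Type*} [LinearOrder V]

lemma lastEdge_nil (e : Finset V) : lastEdge e [] = e := rfl

lemma lastEdge_cons (e : Finset V) (a : V × Finset V) (p : List (V × Finset V)) :
    lastEdge e (a :: p) = lastEdge a.2 p := by
  unfold lastEdge
  rw [List.map_cons, List.getLastD_cons]

lemma lastEdge_append (e : Finset V) (l₁ l₂ : List (V × Finset V)) :
    lastEdge e (l₁ ++ l₂) = lastEdge (lastEdge e l₁) l₂ := by
  induction l₁ generalizing e with
  | nil => rfl
  | cons a l ih => rw [List.cons_append, lastEdge_cons, ih, lastEdge_cons]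

lemma walkAux_nil (H : Finset (Finset V)) (e : Finset V) : WalkAux H e [] := trivial

lemma walkAux_cons (H : Finset (Finset V)) (e f : Finset V) (x : V) (p : List (V × Finset V)) :
    WalkAux H e ((x, f) :: p) ↔ x ∈ e ∧ x ∈ f ∧ f ∈ H ∧ WalkAux H f p := Iff.rfl

lemma walkAux_append (H : Finset (Finset V)) (l₁ l₂ : List (V × Finset V)) (f : Finset V) :
    WalkAux H f (l₁ ++ l₂) ↔ WalkAux H f l₁ ∧ WalkAux H (lastEdge f l₁) l₂ := by
  induction l₁ generalizing f with
  | nil => simp [walkAux_nil, lastEdge_nil]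
  | cons a l ih =>
    obtain ⟨w, g⟩ := a
    rw [List.cons_append, walkAux_cons, walkAux_cons, ih, lastEdge_cons]
    tauto

lemma betaElim_forall {H : Finset (Finset V)} (hβ : IsBetaElim H)
    {w : V} {g h : Finset V} (hg : g ∈ H) (hh : h ∈ H) (hwg : w ∈ g) (hwh : w ∈ h) :
    (∀ z ∈ g, w < z → z ∈ h) ∨ (∀ z ∈ h, w < z → z ∈ g) := by
  rcases hβ w g hg h hh hwg hwh with hc | hc
  · exact Or.inl fun z hz hlt => hc (Finset.mem_filter.mpr ⟨hz, hlt⟩)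
  · exact Or.inr fun z hz hlt => hc (Finset.mem_filter.mpr ⟨hz, hlt⟩)

lemma edgeLT_max {f e : Finset V} (hfe : edgeLT f e) {y : V} (hyf : y ∈ f) (hye : y ∉ e) :
    ∃ M, M ∈ e ∧ M ∉ f ∧ y < M := by
  obtain ⟨hne, hmax⟩ := hfe
  have hMmem := (symmDiff f e).max'_mem hne
  have hMf : (symmDiff f e).max' hne ∉ f := by
    rcases Finset.mem_symmDiff.mp hMmem with ⟨_, hne'⟩ | ⟨_, hnf⟩
    · exact absurd hmax hne'
    · exact hnf
  refine ⟨(symmDiff f e).max' hne, hmax, hMf, ?_⟩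
  have hy : y ∈ symmDiff f e := Finset.mem_symmDiff.mpr (Or.inl ⟨hyf, hye⟩)
  have hle := Finset.le_max' _ y hy
  exact lt_of_le_of_ne hle (fun h => hye (h ▸ hmax))

/-- The chain argument: given the invariant that the current edge `g`'s vertices above the
current vertex `v` are in the previous edge `gp` and those above `x₁` are in `f`, either we
can shortcut the walk (contradiction via `SIH`) or propagate the invariant to the end,
where `M ∈ e`, `x₁ < M`, `M ∉ f` gives a contradiction. -/
lemma chain_aux (H : Finset (Finset V)) (hβ : IsBetaElim H)
    (e f : Finset V) (hf : f ∈ H) (x x₁ M : V)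
    (hMe : M ∈ e) (hMx₁ : x₁ < M) (hMf : M ∉ f) (n : ℕ)
    (SIH : ∀ p₂ : List (V × Finset V), p₂.length < n → IsWalk H f e p₂ →
      (∀ q ∈ p₂, edgeLE q.2 e ∧ q.1 ≤ x) → False) :
    ∀ (q pre : List (V × Finset V)) (g gp : Finset V) (v : V),
      (pre ++ (v, g) :: q).length = n →
      WalkAux H f pre →
      lastEdge f pre = gp →
      lastEdge g q = e →
      WalkAux H g q →
      (∀ a ∈ pre ++ (v, g) :: q, edgeLE a.2 e ∧ a.1 ≤ x) →
      g ∈ H → v ∈ g → v ∈ gp → v ≤ x₁ →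
      (∀ z ∈ g, v < z → z ∈ gp) →
      (∀ z ∈ g, x₁ < z → z ∈ f) → False := by
  intro q
  induction q with
  | nil =>
    intro pre g gp v hlen hpre hgp hlast hwalk hcond hgH hvg hvgp hvx₁ hsub hsubf
    rw [lastEdge_nil] at hlast
    exact hMf (hsubf M (by rw [hlast]; exact hMe) hMx₁)
  | cons a q'' ih =>
    obtain ⟨w, h⟩ := a
    intro pre g gp v hlen hpre hgp hlast hwalk hcond hgH hvg hvgp hvx₁ hsub hsubf
    obtain ⟨hwg, hwh, hhH, hwalk''⟩ := hwalk
    rw [lastEdge_cons] at hlast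
    have hvx : v ≤ x := (hcond (v, g) (by simp)).2
    have hhe : edgeLE h e := (hcond (w, h) (by simp)).1
    have hwx : w ≤ x := (hcond (w, h) (by simp)).2
    have shortcut : ∀ w' : V, w' ≤ x → w' ∈ gp → w' ∈ h → False := by
      intro w' hw'x hw'gp hw'h
      apply SIH (pre ++ (w', h) :: q'')
      · rw [← hlen]
        simp only [List.length_append, List.length_cons]
        omega
      · refine ⟨hf, ?_, ?_⟩
        · rw [walkAux_append]
          refine ⟨hpre, ?_⟩
          rw [hgp, walkAux_cons]
          exact ⟨hw'gp, hw'h, hhH, hwalk''⟩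
        · rw [lastEdge_append, hgp, lastEdge_cons]
          exact hlast
      · intro a ha
        rcases List.mem_append.mp ha with ha | ha
        · exact hcond a (List.mem_append_left _ ha)
        · rcases List.mem_cons.mp ha with rfl | ha
          · exact ⟨hhe, hw'x⟩
          · exact hcond a (by simp [ha])
    rcases le_or_gt v w with hvw | hwv
    · rcases eq_or_lt_of_le hvw with heq | hlt
      · exact shortcut w hwx (by rw [← heq]; exact hvgp) hwh
      · exact shortcut w hwx (hsub w hwg hlt) hwh
    · rcases betaElim_forall hβ hgH hhH hwg hwh with hc | hc
      · exact shortcut v hvx hvgp (hc v hvg hwv)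
      · refine ih (pre ++ [(v, g)]) h g w ?_ ?_ ?_ hlast hwalk'' ?_ hhH hwh hwg
          (hwv.le.trans hvx₁) hc ?_
        · rw [← hlen]
          simp only [List.append_assoc, List.singleton_append]
        · rw [walkAux_append]
          refine ⟨hpre, ?_⟩
          rw [hgp, walkAux_cons]
          exact ⟨hvgp, hvg, hgH, trivial⟩
        · rw [lastEdge_append, hgp, lastEdge_cons, lastEdge_nil]
        · intro a ha
          apply hcond
          simp only [List.append_assoc, List.singleton_append] at ha
          exact ha
        · intro z hz hx₁z
          exact hsubf z (hc z hz ((hwv.trans_le hvx₁).trans hx₁z)) hx₁z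

lemma main_aux (H : Finset (Finset V)) (hβ : IsBetaElim H) (e : Finset V) (x : V) :
    ∀ (n : ℕ) (p : List (V × Finset V)) (f : Finset V), p.length = n →
      IsWalk H f e p → edgeLE f e → (∀ q ∈ p, edgeLE q.2 e ∧ q.1 ≤ x) →
      ∀ y ∈ f, x ≤ y → y ∈ e := by
  intro n
  induction n using Nat.strong_induction_on with
  | _ n IH =>
  intro p f hlen hwalk hfe hcond y hyf hxy
  obtain ⟨hfH, hwa, hle⟩ := hwalk
  match p, hwa, hle, hcond, hlen with
  | [], hwa, hle, hcond, hlen =>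
    rw [lastEdge_nil] at hle
    exact hle ▸ hyf
  | (x₁, f₁) :: p', hwa, hle, hcond, hlen =>
    obtain ⟨hx₁f, hx₁f₁, hf₁H, hwa'⟩ := hwa
    rw [lastEdge_cons] at hle
    have hx₁x : x₁ ≤ x := (hcond (x₁, f₁) (by simp)).2
    have hf₁e' : edgeLE f₁ e := (hcond (x₁, f₁) (by simp)).1
    have hcond' : ∀ q ∈ p', edgeLE q.2 e ∧ q.1 ≤ x := fun q hq => hcond q (by simp [hq])
    have hf₁e : ∀ z ∈ f₁, x ≤ z → z ∈ e :=
      IH p'.length (by rw [List.length_cons] at hlen; omega) p' f₁ rfl ⟨hf₁H, hwa', hle⟩ hf₁e' hcond'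
    by_contra hye
    have hyf₁ : y ∉ f₁ := fun hh => hye (hf₁e y hh hxy)
    have hx₁y : x₁ < y :=
      lt_of_le_of_ne (hx₁x.trans hxy) (fun hh => hyf₁ (hh ▸ hx₁f₁))
    rcases betaElim_forall hβ hfH hf₁H hx₁f hx₁f₁ with hA | hB
    · exact hye (hf₁e y (hA y hyf hx₁y) hxy)
    · have hfne : f ≠ e := fun hh => hye (hh ▸ hyf)
      have hfe' : edgeLT f e := hfe.resolve_left hfne
      obtain ⟨M, hMe, hMf, hyM⟩ := edgeLT_max hfe' hyf hye
      have SIH : ∀ p₂ : List (V × Finset V), p₂.length < n → IsWalk H f e p₂ →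
          (∀ q ∈ p₂, edgeLE q.2 e ∧ q.1 ≤ x) → False := by
        intro p₂ hl hw hc
        exact hye (IH p₂.length hl p₂ f rfl hw hfe hc y hyf hxy)
      exact chain_aux H hβ e f hfH x x₁ M hMe (hx₁y.trans hyM) hMf n SIH p' [] f₁ f x₁
        (by simpa using hlen) trivial rfl hle hwa' (by simpa using hcond) hf₁H hx₁f₁ hx₁f
        le_rfl hB hB

theorem hex_vars {V : Type*} [LinearOrder V] (H : Finset (Finset V))
    (hβ : IsBetaElim H) (e : Finset V) (he : e ∈ H) (x : V) :
    ∀ f, memHex H e x f → ∀ y ∈ f, x ≤ y → y ∈ e := by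
  intro f hmem y hyf hxy
  obtain ⟨p, hwalk, hfe, hcond⟩ := hmem
  exact main_aux H hβ e x p.length p f rfl hwalk hfe hcond y hyf hxy
end

section
/- Let X = {x_1,...,x_k} and Y = {y_1,...,y_k} be two disjoint sets of k Boolean variables, and let f : {0,1}^{X∪Y} → {0,1} be the function computed by the CNF ∧_{i=1}^k (x_i ∨ y_i). Any family of (X,Y)-rectangles whose union of satisfying sets equals sat(f) has size at least 2^k. -/
/-- Covering `⋀_{i=1}^k (x_i ∨ y_i)` by `(X,Y)`-rectangles requires at least `2^k`
rectangles. Variables: `Sum.inl i` is `x_i`, `Sum.inr i` is `y_i`. -/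
theorem rectangle_cover_lower_bound (k : ℕ)
    (R : Finset (((Fin k ⊕ Fin k) → Bool) → Bool))
    (hrect : ∀ r ∈ R, ∀ τ τ' : (Fin k ⊕ Fin k) → Bool,
      r τ = true → r τ' = true →
      r (Sum.elim (τ ∘ Sum.inl) (τ' ∘ Sum.inr)) = true)
    (hcover : ∀ τ : (Fin k ⊕ Fin k) → Bool,
      (∀ i : Fin k, τ (Sum.inl i) = true ∨ τ (Sum.inr i) = true) ↔
        ∃ r ∈ R, r τ = true) :
    2 ^ k ≤ R.card := by
  classical
  -- fooling set: for a : Fin k → Bool, assignment x_i = a i, y_i = ¬ a i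
  set τ : (Fin k → Bool) → ((Fin k ⊕ Fin k) → Bool) :=
    fun a => Sum.elim a (fun i => !a i) with hτ
  have hsat : ∀ a : Fin k → Bool, ∀ i : Fin k,
      τ a (Sum.inl i) = true ∨ τ a (Sum.inr i) = true := by
    intro a i
    cases h : a i <;> simp [hτ, h]
  have hex : ∀ a : Fin k → Bool, ∃ r ∈ R, r (τ a) = true := by
    intro a
    exact (hcover (τ a)).mp (hsat a)
  choose g hgR hg using hex
  have hginj : Function.Injective g := by
    intro a b hab
    have hra : g a (τ a) = true := hg a
    have hrb : g a (τ b) = true := by rw [hab]; exact hg b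
    have h1 := hrect (g a) (hgR a) (τ a) (τ b) hra hrb
    have h2 := hrect (g a) (hgR a) (τ b) (τ a) hrb hra
    have c1 := (hcover _).mpr ⟨g a, hgR a, h1⟩
    have c2 := (hcover _).mpr ⟨g a, hgR a, h2⟩
    funext i
    have d1 := c1 i
    have d2 := c2 i
    simp only [hτ, Sum.elim_inl, Sum.elim_inr, Function.comp] at d1 d2
    cases ha : a i <;> cases hb : b i <;> simp_all
  calc 2 ^ k = Fintype.card (Fin k → Bool) := by simp [Fintype.card_fun]
    _ ≤ R.card := Fintype.card_le_of_injective (fun a => (⟨g a, hgR a⟩ : {r // r ∈ R}))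
        (fun a b h => hginj (Subtype.mk_eq_mk.mp h)) |>.trans_eq (Fintype.card_coe R)
end

section
/- A β-acyclic hypergraph with n vertices has at most n(n+1)/2 edges. -/
variable {V : Type*} [LinearOrder V]

theorem betaAcyclic_card_bound {V : Type*} [DecidableEq V]
    (H : Finset (Finset V)) (hne : ∀ e ∈ H, e.Nonempty)
    (hacyc : ∃ lo : LinearOrder V, @IsBetaElim V lo H) :
    H.card ≤ (H.biUnion id).card * ((H.biUnion id).card + 1) / 2 := by
  classical
  obtain ⟨lo, helim0⟩ := hacyc
  letI : LinearOrder V := lo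
  have helim : ∀ x : V, ∀ e ∈ H, ∀ f ∈ H, x ∈ e → x ∈ f →
      (e.filter fun y => x < y) ⊆ f ∨ (f.filter fun y => x < y) ⊆ e := helim0
  rcases H.eq_empty_or_nonempty with hH | ⟨e0, he0⟩
  · simp [hH]
  obtain ⟨v0, -⟩ := hne e0 he0
  set U : Finset V := H.biUnion id with hUdef
  have hsubU : ∀ e ∈ H, e ⊆ U := fun e he y hy => Finset.mem_biUnion.mpr ⟨e, he, hy⟩
  set m : Finset V → V := fun e => if h : e.Nonempty then e.min' h else v0 with hm
  have hmmem : ∀ e ∈ H, m e ∈ e := by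
    intro e he
    simp only [hm, dif_pos (hne e he)]
    exact Finset.min'_mem _ _
  have hmle : ∀ e ∈ H, ∀ y ∈ e, m e ≤ y := by
    intro e he y hy
    simp only [hm, dif_pos (hne e he)]
    exact Finset.min'_le _ _ hy
  have hmU : ∀ e ∈ H, m e ∈ U := fun e he => hsubU e he (hmmem e he)
  have hsplit : H.card = ∑ x ∈ U, (H.filter fun e => m e = x).card :=
    Finset.card_eq_sum_card_fiberwise hmU
  have hfiber : ∀ x ∈ U, (H.filter fun e => m e = x).card
      ≤ (U.filter fun y => x ≤ y).card := by
    intro x hx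
    have h1 : (H.filter fun e => m e = x).card
        ≤ (Finset.Icc 1 ((U.filter fun y => x ≤ y).card)).card := by
      apply Finset.card_le_card_of_injOn Finset.card
      · intro e he
        simp only [Finset.coe_filter, Set.mem_setOf_eq] at he
        obtain ⟨heH, hme⟩ := he
        have hsub : e ⊆ U.filter fun y => x ≤ y := by
          intro y hy
          rw [Finset.mem_filter]
          exact ⟨hsubU e heH hy, hme ▸ hmle e heH y hy⟩
        rw [Finset.mem_coe, Finset.mem_Icc]
        exact ⟨(hne e heH).card_pos, Finset.card_le_card hsub⟩
      · intro e heF f hfF hcard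
        simp only [Finset.coe_filter, Set.mem_setOf_eq] at heF hfF
        obtain ⟨heH, hme⟩ := heF
        obtain ⟨hfH, hmf⟩ := hfF
        have hxe : x ∈ e := hme ▸ hmmem e heH
        have hxf : x ∈ f := hmf ▸ hmmem f hfH
        have hchain : e ⊆ f ∨ f ⊆ e := by
          rcases helim x e heH f hfH hxe hxf with h | h
          · left
            intro y hy
            rcases eq_or_ne y x with rfl | hyx
            · exact hxf
            · exact h (Finset.mem_filter.mpr ⟨hy,
                lt_of_le_of_ne (hme ▸ hmle e heH y hy) (Ne.symm hyx)⟩)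
          · right
            intro y hy
            rcases eq_or_ne y x with rfl | hyx
            · exact hxe
            · exact h (Finset.mem_filter.mpr ⟨hy,
                lt_of_le_of_ne (hmf ▸ hmle f hfH y hy) (Ne.symm hyx)⟩)
        rcases hchain with h | h
        · exact Finset.eq_of_subset_of_card_le h (le_of_eq hcard.symm)
        · exact (Finset.eq_of_subset_of_card_le h (le_of_eq hcard)).symm
    simpa using h1
  have hHS : H.card ≤ ∑ x ∈ U, (U.filter fun y => x ≤ y).card := by
    rw [hsplit]
    exact Finset.sum_le_sum hfiber
  set n := U.card with hn
  have h2 : ∀ x ∈ U, (U.filter fun y => x ≤ y).card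
      = (U.filter fun y => x < y).card + 1 := by
    intro x hx
    have heq : U.filter (fun y => x ≤ y) = insert x (U.filter fun y => x < y) := by
      ext y
      simp only [Finset.mem_filter, Finset.mem_insert]
      constructor
      · rintro ⟨hyU, hxy⟩
        rcases eq_or_lt_of_le hxy with rfl | h
        · exact Or.inl rfl
        · exact Or.inr ⟨hyU, h⟩
      · rintro (rfl | ⟨hyU, h⟩)
        · exact ⟨hx, le_refl _⟩
        · exact ⟨hyU, le_of_lt h⟩
    rw [heq, Finset.card_insert_of_notMem (by simp)]
  have h3 : ∀ x : V, (U.filter fun y => x ≤ y).card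
      + (U.filter fun y => y < x).card = n := by
    intro x
    have := Finset.card_filter_add_card_filter_not
      (s := U) (p := fun y => x ≤ y)
    simpa [not_le] using this
  have hsymm : ∑ x ∈ U, (U.filter fun y => y < x).card
      = ∑ x ∈ U, (U.filter fun y => x < y).card := by
    simp only [Finset.card_filter]
    exact Finset.sum_comm
  have e1 : ∑ x ∈ U, (U.filter fun y => x ≤ y).card
      = (∑ x ∈ U, (U.filter fun y => x < y).card) + n := by
    rw [Finset.sum_congr rfl h2, Finset.sum_add_distrib]
    simp [hn]
  have e2 : (∑ x ∈ U, (U.filter fun y => x ≤ y).card)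
      + (∑ x ∈ U, (U.filter fun y => x < y).card) = n * n := by
    rw [← hsymm, ← Finset.sum_add_distrib]
    rw [Finset.sum_congr rfl fun x _ => h3 x]
    simp [mul_comm, hn]
  have hnn : n * (n + 1) = n * n + n := by ring
  rw [hnn]
  omega
end

section
/- Let H be a β-acyclic hypergraph with β-elimination order whose first vertex is x_1, edge order <_H, and let e ∈ H with x_1 ∈ e. Then every edge f ∈ H_e^{x_1} satisfies x_1 ∈ f ⊆ e or f = e. -/
variable {V : Type*} [LinearOrder V]

theorem hex_min_vertex {V : Type*} [LinearOrder V] (H : Finset (Finset V))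
    (hβ : IsBetaElim H) (x1 : V) (hmin : ∀ y : V, x1 ≤ y)
    (e : Finset V) (he : e ∈ H) (hx1e : x1 ∈ e) :
    ∀ f, memHex H e x1 f → (x1 ∈ f ∧ f ⊆ e) ∨ f = e := by
  rintro f ⟨p, ⟨hfH, hwalk, hlast⟩, hle, hall⟩
  cases p with
  | nil => right; simpa [lastEdge] using hlast
  | cons q p' =>
    left
    have hx : q.1 = x1 := le_antisymm (hall q List.mem_cons_self).2 (hmin _)
    have hq1f : q.1 ∈ f := by
      obtain ⟨a, b⟩ := q
      exact hwalk.1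
    have hx1f : x1 ∈ f := hx ▸ hq1f
    refine ⟨hx1f, ?_⟩
    rcases hβ x1 f hfH e he hx1f hx1e with h | h
    · -- f.filter (x1 < ·) ⊆ e
      intro y hy
      by_cases hyx : y = x1
      · exact hyx ▸ hx1e
      · exact h (Finset.mem_filter.mpr ⟨hy, lt_of_le_of_ne (hmin y) (Ne.symm hyx)⟩)
    · -- e.filter (x1 < ·) ⊆ f, hence e ⊆ f
      have hef : e ⊆ f := by
        intro y hy
        by_cases hyx : y = x1
        · exact hyx ▸ hx1f
        · exact h (Finset.mem_filter.mpr ⟨hy, lt_of_le_of_ne (hmin y) (Ne.symm hyx)⟩)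
      rcases hle with rfl | ⟨hne, hmax⟩
      · exact fun _ h => h
      · exfalso
        have := Finset.max'_mem _ hne
        rw [Finset.mem_symmDiff] at this
        rcases this with ⟨hf, hne'⟩ | ⟨he', hnf⟩
        · exact hne' hmax
        · exact hnf (hef he')
end

section
/- Let F be a monotone CNF formula and M an induced matching of size q in the bipartite incidence graph of F between a set V_t of variable/clause vertices and its complement, such that for each matched pair (x_e, c_e) with e ∈ M, x_e is a variable of the clause c_e, and for distinct e, e' ∈ M, the variable x_{e'} does not occur in clause c_e. Let τ be the partial assignment setting every clause-indicator variable c_K with K not matched in M to 1 (in the formula F̂ where a fresh variable c_K is added to each clause K) and setting every original variable not matched in M to 0. Then the restricted function F̂[τ] is logically equivalent to ∧_{e ∈ M} (x_e ∨ c_e). -/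
/-- A monotone CNF `F` is a finite set of clauses, each clause a finite set of
(positive) variables. In `F̂`, each clause `K` gets a fresh indicator variable
`Sum.inr K`; original variables are `Sum.inl v`. Given an induced matching `M`
(a set of pairs `(x_e, c_e)` with `x_e` a variable of clause `c_e`, pairwise
using distinct variables and distinct clauses, and with `x_{e'} ∉ c_e` for
distinct pairs), the partial assignment `τ` sets every unmatched clause
indicator to true and every unmatched original variable to false. Then
`F̂[τ] ≡ ⋀_{e ∈ M} (x_e ∨ c_e)`. -/
theorem hat_restriction_equiv_matching {V : Type*} [DecidableEq V]
    (F : Finset (Finset V)) (M : Finset (V × Finset V))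
    (hM : ∀ p ∈ M, p.2 ∈ F ∧ p.1 ∈ p.2)
    (hind : ∀ p ∈ M, ∀ q ∈ M, p ≠ q → p.1 ≠ q.1 ∧ p.2 ≠ q.2 ∧ p.1 ∉ q.2) :
    ∀ σ : V ⊕ Finset V → Bool,
      let σ' : V ⊕ Finset V → Bool := fun w =>
        match w with
        | .inl v => if v ∈ M.image Prod.fst then σ (.inl v) else false
        | .inr K => if K ∈ M.image Prod.snd then σ (.inr K) else true
      ((∀ K ∈ F, σ' (.inr K) = true ∨ ∃ v ∈ K, σ' (.inl v) = true) ↔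
        ∀ p ∈ M, σ (.inl p.1) = true ∨ σ (.inr p.2) = true) := by
  intro σ σ'
  constructor
  · intro h p hp
    rcases h p.2 (hM p hp).1 with h1 | ⟨v, hv, h2⟩
    · right
      simpa [σ', Finset.mem_image.mpr ⟨p, hp, rfl⟩] using h1
    · left
      have hvim : v ∈ M.image Prod.fst := by
        by_contra hc
        simp [σ', hc] at h2
      rcases Finset.mem_image.mp hvim with ⟨q, hq, rfl⟩
      have hqp : q = p := by
        by_contra hne
        exact (hind q hq p hp hne).2.2 hv
      subst hqp
      simpa [σ', Finset.mem_image.mpr ⟨q, hq, rfl⟩] using h2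
  · intro h K hK
    by_cases hKm : K ∈ M.image Prod.snd
    · rcases Finset.mem_image.mp hKm with ⟨q, hq, rfl⟩
      rcases h q hq with h1 | h2
      · right
        refine ⟨q.1, (hM q hq).2, ?_⟩
        simpa [σ', Finset.mem_image.mpr ⟨q, hq, rfl⟩] using h1
      · left
        simpa [σ', hKm] using h2
    · left
      simp [σ', hKm]
end

section
/- Let F be a monotone CNF formula whose incidence graph has MIM-width k, and let F̂ be obtained from F by adding a fresh variable to each clause. Then every structured DNNF computing F̂ has size at least 2^{k/2}. -/
/-- Labels of the gates of an NNF circuit: literals (a variable together with a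
polarity), boolean constants, ∧-gates and ∨-gates. -/
inductive GateLabel (V : Type*) where
  | lit (x : V) (b : Bool)
  | const (b : Bool)
  | and
  | or

/-- An NNF circuit: a DAG whose gates are indexed by `Fin size`, wires go from
smaller indices to larger ones, inputs are labeled by literals or constants and
internal gates by ∧ or ∨, with a distinguished output gate. -/
structure NNFCircuit (V : Type*) where
  size : ℕ
  label : Fin size → GateLabel V
  wires : Fin size → List (Fin size)
  wiresLt : ∀ i : Fin size, ∀ j ∈ wires i, (j : ℕ) < (i : ℕ)
  inputsOk : ∀ i : Fin size,
    (label i = GateLabel.and ∨ label i = GateLabel.or) ∨ wires i = []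
  output : Fin size

namespace NNFCircuit

variable {V : Type*}

/-- The boolean value computed at gate `i` under assignment `τ`. -/
def eval (C : NNFCircuit V) (τ : V → Bool) (i : Fin C.size) : Bool :=
  match C.label i with
  | .lit x b => τ x == b
  | .const b => b
  | .and => (C.wires i).attach.all fun j => C.eval τ j.1
  | .or => (C.wires i).attach.any fun j => C.eval τ j.1
termination_by (i : ℕ)
decreasing_by all_goals exact C.wiresLt i j.1 j.2

/-- The set of variables appearing in the subcircuit rooted at gate `i`. -/
def vars [DecidableEq V] (C : NNFCircuit V) (i : Fin C.size) : Finset V :=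
  match C.label i with
  | .lit x _ => {x}
  | .const _ => ∅
  | .and => (C.wires i).attach.foldr (fun j acc => C.vars j.1 ∪ acc) ∅
  | .or => (C.wires i).attach.foldr (fun j acc => C.vars j.1 ∪ acc) ∅
termination_by (i : ℕ)
decreasing_by all_goals exact C.wiresLt i j.1 j.2

/-- A circuit is a DNNF if every ∧-gate is decomposable: the subcircuits rooted at
its distinct inputs have pairwise disjoint sets of variables. -/
def IsDNNF [DecidableEq V] (C : NNFCircuit V) : Prop :=
  ∀ i : Fin C.size, C.label i = .and →
    ∀ j ∈ C.wires i, ∀ k ∈ C.wires i, j ≠ k → Disjoint (C.vars j) (C.vars k)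

/-- Gate `i` is a decision gate: it is a binary ∨-gate of the form
`(x ∧ v₁) ∨ (¬x ∧ v₂)` for some variable `x`. -/
def IsDecisionGate (C : NNFCircuit V) (i : Fin C.size) : Prop :=
  ∃ (x : V) (a b pa va pb vb : Fin C.size),
    C.wires i = [a, b] ∧
    C.label a = .and ∧ C.label b = .and ∧
    C.wires a = [pa, va] ∧ C.wires b = [pb, vb] ∧
    C.label pa = .lit x true ∧ C.label pb = .lit x false

/-- A decision-DNNF: a DNNF in which every ∨-gate is a decision gate. -/
def IsDecDNNF [DecidableEq V] (C : NNFCircuit V) : Prop :=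
  C.IsDNNF ∧ ∀ i : Fin C.size, C.label i = .or → C.IsDecisionGate i

end NNFCircuit

/-- Binary trees with leaves labeled by `α`; used both as vtrees and as branch
decompositions. -/
inductive VTree (α : Type*) where
  | leaf (a : α)
  | node (l r : VTree α)

namespace VTree

variable {α : Type*}

def leavesList : VTree α → List α
  | .leaf a => [a]
  | .node l r => l.leavesList ++ r.leavesList

def leaves [DecidableEq α] : VTree α → Finset α
  | .leaf a => {a}
  | .node l r => l.leaves ∪ r.leaves

/-- All subtrees (i.e. nodes) of a tree. -/
def subtrees : VTree α → List (VTree α)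
  | .leaf a => [.leaf a]
  | .node l r => .node l r :: (l.subtrees ++ r.subtrees)

end VTree

/-- The DNNF `C` respects the vtree `T`: every ∧-gate is binary, and some node
of `T` splits its two inputs' variables. -/
def RespectsVtree {α : Type*} [DecidableEq α] (C : NNFCircuit α) (T : VTree α) : Prop :=
  ∀ i : Fin C.size, C.label i = .and →
    ∃ l r : VTree α, VTree.node l r ∈ T.subtrees ∧
      ∃ a b : Fin C.size, C.wires i = [a, b] ∧
        C.vars a ⊆ l.leaves ∧ C.vars b ⊆ r.leaves

section IncidenceGraph

variable {V : Type*} [DecidableEq V]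

/-- Adjacency in the incidence graph of the monotone CNF `F`: a variable vertex
`Sum.inl v` is adjacent to a clause vertex `Sum.inr K` iff `v` occurs in `K ∈ F`. -/
def IncAdj (F : Finset (Finset V)) (a b : V ⊕ Finset V) : Prop :=
  ∃ v K, K ∈ F ∧ v ∈ K ∧
    ((a = Sum.inl v ∧ b = Sum.inr K) ∨ (a = Sum.inr K ∧ b = Sum.inl v))

/-- The vertex set of the incidence graph of `F` (equivalently, the variables of
`F̂`): the variables of `F` together with one indicator per clause. -/
def IncVerts (F : Finset (Finset V)) : Finset (V ⊕ Finset V) :=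
  (F.biUnion id).image Sum.inl ∪ F.image Sum.inr

/-- `M` is an induced matching of the bipartite graph between `A` and its
complement (inside the incidence graph of `F`). -/
def IsInducedMatching (F : Finset (Finset V)) (A : Finset (V ⊕ Finset V))
    (M : Finset ((V ⊕ Finset V) × (V ⊕ Finset V))) : Prop :=
  (∀ p ∈ M, p.1 ∈ A ∧ p.2 ∈ IncVerts F ∧ p.2 ∉ A ∧ IncAdj F p.1 p.2) ∧
  ∀ p ∈ M, ∀ q ∈ M, p ≠ q →
    p.1 ≠ q.1 ∧ p.2 ≠ q.2 ∧ ¬ IncAdj F p.1 q.2 ∧ ¬ IncAdj F q.1 p.2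

/-- `T` is a branch decomposition of the incidence graph of `F`: its leaves are in
one-to-one correspondence with the vertices. -/
def IsBranchDecomp (F : Finset (Finset V)) (T : VTree (V ⊕ Finset V)) : Prop :=
  T.leavesList.Nodup ∧ T.leaves = IncVerts F

end IncidenceGraph

set_option linter.unusedSectionVars false
section Aux1
variable {W : Type*} [DecidableEq W]

namespace NNFCircuit
variable (C : NNFCircuit W)

lemma eval_lit {i : Fin C.size} {x : W} {b : Bool} (h : C.label i = .lit x b) (σ : W → Bool) :
    C.eval σ i = (σ x == b) := by
  rw [eval]; split <;> simp_all

lemma eval_const {i : Fin C.size} {b : Bool} (h : C.label i = .const b) (σ : W → Bool) :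
    C.eval σ i = b := by
  rw [eval]; split <;> simp_all

lemma eval_and_iff {i : Fin C.size} (h : C.label i = .and) (σ : W → Bool) :
    C.eval σ i = true ↔ ∀ j ∈ C.wires i, C.eval σ j = true := by
  rw [eval]
  split <;> simp_all [List.all_eq_true, List.any_eq_true]

lemma eval_or_iff {i : Fin C.size} (h : C.label i = .or) (σ : W → Bool) :
    C.eval σ i = true ↔ ∃ j ∈ C.wires i, C.eval σ j = true := by
  rw [eval]
  split <;> simp_all [List.all_eq_true, List.any_eq_true]

lemma vars_lit {i : Fin C.size} {x : W} {b : Bool} (h : C.label i = .lit x b) :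
    C.vars i = {x} := by
  rw [vars]; split <;> simp_all

lemma vars_const {i : Fin C.size} {b : Bool} (h : C.label i = .const b) :
    C.vars i = ∅ := by
  rw [vars]; split <;> simp_all

lemma vars_eq_foldr {i : Fin C.size} (h : C.label i = .and ∨ C.label i = .or) :
    C.vars i = (C.wires i).attach.foldr (fun j acc => C.vars j.1 ∪ acc) ∅ := by
  rw [vars]
  rcases h with h | h <;> (split <;> simp_all)

lemma vars_child_subset {i j : Fin C.size} (h : C.label i = .and ∨ C.label i = .or)
    (hj : j ∈ C.wires i) : C.vars j ⊆ C.vars i := by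
  have key : ∀ (l : List {x // x ∈ C.wires i}) (e : {x // x ∈ C.wires i}), e ∈ l →
      C.vars e.1 ⊆ l.foldr (fun j acc => C.vars j.1 ∪ acc) ∅ := by
    intro l
    induction l with
    | nil => simp
    | cons a t ih =>
      intro e he
      rcases List.mem_cons.mp he with rfl | he
      · exact Finset.subset_union_left
      · exact (ih e he).trans Finset.subset_union_right
  rw [vars_eq_foldr C h]
  exact key (C.wires i).attach ⟨j, hj⟩ (List.mem_attach _ _)

/-- eval depends only on the variables of the gate. -/
lemma eval_congr {σ τ : W → Bool} :
    ∀ (i : Fin C.size), (∀ x ∈ C.vars i, σ x = τ x) → C.eval σ i = C.eval τ i := by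
  suffices H : ∀ n (i : Fin C.size), (i : ℕ) < n → (∀ x ∈ C.vars i, σ x = τ x) →
      C.eval σ i = C.eval τ i by
    intro i h; exact H ((i : ℕ) + 1) i (Nat.lt_succ_self _) h
  intro n
  induction n with
  | zero => intro i hi; exact absurd hi (Nat.not_lt_zero _)
  | succ n ih =>
    intro i hi hagree
    cases hl : C.label i with
    | lit x b => rw [eval_lit C hl, eval_lit C hl, hagree x (by simp [vars_lit C hl])]
    | const b => rw [eval_const C hl, eval_const C hl]
    | and =>
      have h1 := eval_and_iff C hl σ
      have h2 := eval_and_iff C hl τ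
      have hj : ∀ j ∈ C.wires i, C.eval σ j = C.eval τ j := by
        intro j hjw
        refine ih j (by have := C.wiresLt i j hjw; omega) fun x hx => hagree x ?_
        exact vars_child_subset C (Or.inl hl) hjw hx
      cases hb : C.eval τ i with
      | true => rw [h1]; intro j hjw; rw [hj j hjw]; exact (h2.mp hb) j hjw
      | false =>
        by_contra hc
        have : C.eval σ i = true := by simpa using hc
        have := h1.mp this
        have : C.eval τ i = true := h2.mpr fun j hjw => (hj j hjw) ▸ this j hjw
        simp_all
    | or =>
      have h1 := eval_or_iff C hl σ
      have h2 := eval_or_iff C hl τ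
      have hj : ∀ j ∈ C.wires i, C.eval σ j = C.eval τ j := by
        intro j hjw
        refine ih j (by have := C.wiresLt i j hjw; omega) fun x hx => hagree x ?_
        exact vars_child_subset C (Or.inr hl) hjw hx
      cases hb : C.eval τ i with
      | true =>
        obtain ⟨j, hjw, hje⟩ := h2.mp hb
        rw [h1.mpr ⟨j, hjw, (hj j hjw).trans hje⟩]
      | false =>
        by_contra hc
        have : C.eval σ i = true := by simpa using hc
        obtain ⟨j, hjw, hje⟩ := h1.mp this
        have : C.eval τ i = true := h2.mpr ⟨j, hjw, (hj j hjw).symm.trans hje⟩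
        simp_all

end NNFCircuit
end Aux1
section Aux2
variable {α : Type*} [DecidableEq α]

namespace VTree

lemma mem_leaves_iff (t : VTree α) (x : α) : x ∈ t.leaves ↔ x ∈ t.leavesList := by
  induction t with
  | leaf a => simp [leaves, leavesList]
  | node l r ihl ihr => simp [leaves, leavesList, ihl, ihr]

lemma self_mem_subtrees (t : VTree α) : t ∈ t.subtrees := by
  cases t with
  | leaf a => simp [subtrees]
  | node l r => simp [subtrees]

lemma subtrees_trans {t u w : VTree α} (hu : u ∈ t.subtrees) (hw : w ∈ u.subtrees) :
    w ∈ t.subtrees := by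
  induction t with
  | leaf a =>
    simp only [subtrees, List.mem_singleton] at hu
    subst hu; exact hw
  | node l r ihl ihr =>
    simp only [subtrees, List.mem_cons, List.mem_append] at hu ⊢
    rcases hu with rfl | hu | hu
    · simpa [subtrees] using hw
    · exact Or.inr (Or.inl (ihl hu))
    · exact Or.inr (Or.inr (ihr hu))

lemma leaves_subset_of_mem {t u : VTree α} (hu : u ∈ t.subtrees) : u.leaves ⊆ t.leaves := by
  induction t with
  | leaf a =>
    simp only [subtrees, List.mem_singleton] at hu
    subst hu; exact subset_rfl
  | node l r ihl ihr =>
    simp only [subtrees, List.mem_cons, List.mem_append] at hu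
    rcases hu with rfl | hu | hu
    · exact subset_rfl
    · exact (ihl hu).trans (by simp [leaves])
    · exact (ihr hu).trans (by simp [leaves])

lemma nodup_of_mem_subtrees {t u : VTree α} (hnd : t.leavesList.Nodup)
    (hu : u ∈ t.subtrees) : u.leavesList.Nodup := by
  induction t with
  | leaf a =>
    simp only [subtrees, List.mem_singleton] at hu
    subst hu; exact hnd
  | node l r ihl ihr =>
    rw [show (node l r).leavesList = l.leavesList ++ r.leavesList from rfl,
      List.nodup_append] at hnd
    simp only [subtrees, List.mem_cons, List.mem_append] at hu
    rcases hu with rfl | hu | hu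
    · rw [show (node l r).leavesList = l.leavesList ++ r.leavesList from rfl,
        List.nodup_append]
      exact hnd
    · exact ihl hnd.1 hu
    · exact ihr hnd.2.1 hu

lemma nested {t : VTree α} (hnd : t.leavesList.Nodup) :
    ∀ s ∈ t.subtrees, ∀ u ∈ t.subtrees,
      s.leaves ⊆ u.leaves ∨ u.leaves ⊆ s.leaves ∨ ∀ x ∈ u.leaves, x ∉ s.leaves := by
  induction t with
  | leaf a =>
    intro s hs u hu
    simp only [subtrees, List.mem_singleton] at hs hu
    subst hs; subst hu; exact Or.inl subset_rfl
  | node l r ihl ihr =>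
    intro s hs u hu
    rw [show (node l r).leavesList = l.leavesList ++ r.leavesList from rfl,
      List.nodup_append] at hnd
    simp only [subtrees, List.mem_cons, List.mem_append] at hs hu
    rcases hs with rfl | hs | hs
    · rcases hu with rfl | hu | hu
      · exact Or.inl subset_rfl
      · exact Or.inr (Or.inl (leaves_subset_of_mem (by
          simp [subtrees, List.mem_cons, List.mem_append, hu])))
      · exact Or.inr (Or.inl (leaves_subset_of_mem (by
          simp [subtrees, List.mem_cons, List.mem_append, hu])))
    · rcases hu with rfl | hu | hu
      · exact Or.inl (leaves_subset_of_mem (by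
          simp [subtrees, List.mem_cons, List.mem_append, hs]))
      · exact ihl hnd.1 s hs u hu
      · -- s in l, u in r : disjoint
        refine Or.inr (Or.inr fun x hxu hxs => ?_)
        have h1 : x ∈ l.leavesList := (mem_leaves_iff _ _).mp (leaves_subset_of_mem hs hxs)
        have h2 : x ∈ r.leavesList := (mem_leaves_iff _ _).mp (leaves_subset_of_mem hu hxu)
        exact hnd.2.2 x h1 x h2 rfl
    · rcases hu with rfl | hu | hu
      · exact Or.inl (leaves_subset_of_mem (by
          simp [subtrees, List.mem_cons, List.mem_append, hs]))
      · refine Or.inr (Or.inr fun x hxu hxs => ?_)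
        have h1 : x ∈ r.leavesList := (mem_leaves_iff _ _).mp (leaves_subset_of_mem hs hxs)
        have h2 : x ∈ l.leavesList := (mem_leaves_iff _ _).mp (leaves_subset_of_mem hu hxu)
        exact hnd.2.2 x h2 x h1 rfl
      · exact ihr hnd.2.1 s hs u hu

lemma node_leaves_disjoint {t l r : VTree α} (hnd : t.leavesList.Nodup)
    (h : VTree.node l r ∈ t.subtrees) : ∀ x ∈ l.leaves, x ∉ r.leaves := by
  have h2 := nodup_of_mem_subtrees hnd h
  rw [show (node l r).leavesList = l.leavesList ++ r.leavesList from rfl,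
    List.nodup_append] at h2
  intro x hx hxr
  exact h2.2.2 x ((mem_leaves_iff _ _).mp hx) x ((mem_leaves_iff _ _).mp hxr) rfl

lemma mem_subtrees_of_node {t l r : VTree α} (h : VTree.node l r ∈ t.subtrees) :
    l ∈ t.subtrees ∧ r ∈ t.subtrees := by
  constructor
  · exact subtrees_trans h (by simp [subtrees, self_mem_subtrees])
  · exact subtrees_trans h (by simp [subtrees, self_mem_subtrees])

end VTree
end Aux2
section Aux3
variable {W : Type*} [DecidableEq W]

/-- A gate is pure w.r.t. a cut `A` if its variables lie entirely inside or
entirely outside `A`. -/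
def NNFPure (C : NNFCircuit W) (A : Finset W) (i : Fin C.size) : Prop :=
  C.vars i ⊆ A ∨ ∀ x ∈ C.vars i, x ∉ A

lemma pure_of_lit {C : NNFCircuit W} {A : Finset W} {i : Fin C.size} {x b}
    (h : C.label i = .lit x b) : NNFPure C A i := by
  by_cases hx : x ∈ A
  · exact Or.inl (by rw [NNFCircuit.vars_lit C h]; simpa)
  · exact Or.inr (by rw [NNFCircuit.vars_lit C h]; simpa)

lemma pure_of_const {C : NNFCircuit W} {A : Finset W} {i : Fin C.size} {b}
    (h : C.label i = .const b) : NNFPure C A i :=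
  Or.inl (by rw [NNFCircuit.vars_const C h]; exact Finset.empty_subset _)

open Classical in
/-- The selector: follows the "mixed path" of the canonical certificate of `σ`
down from gate `i` and returns its endpoint. -/
noncomputable def selg (C : NNFCircuit W) (A : Finset W) (σ : W → Bool) (i : Fin C.size) :
    Fin C.size :=
  if NNFPure C A i then i
  else if C.label i = .or then
    if h : ∃ j, j ∈ C.wires i ∧ C.eval σ j = true then selg C A σ h.choose else i
  else if C.label i = .and then
    if h : ∃ j, j ∈ C.wires i ∧ ¬ NNFPure C A j then selg C A σ h.choose else i
  else i
termination_by (i : ℕ)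
decreasing_by
  · exact C.wiresLt i _ h.choose_spec.1
  · exact C.wiresLt i _ h.choose_spec.1

lemma selg_of_pure {C : NNFCircuit W} {A : Finset W} {σ} {i : Fin C.size}
    (h : NNFPure C A i) : selg C A σ i = i := by
  rw [selg, if_pos h]

lemma selg_or_spec {C : NNFCircuit W} {A : Finset W} {σ} {i : Fin C.size}
    (hnp : ¬ NNFPure C A i) (ho : C.label i = .or) (he : C.eval σ i = true) :
    ∃ c, c ∈ C.wires i ∧ C.eval σ c = true ∧ selg C A σ i = selg C A σ c := by
  have h : ∃ j, j ∈ C.wires i ∧ C.eval σ j = true := by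
    obtain ⟨j, hj, hje⟩ := (NNFCircuit.eval_or_iff C ho σ).mp he
    exact ⟨j, hj, hje⟩
  refine ⟨h.choose, h.choose_spec.1, h.choose_spec.2, ?_⟩
  rw [selg, if_neg hnp, if_pos ho, dif_pos h]

lemma selg_and_some {C : NNFCircuit W} {A : Finset W} {σ} {i : Fin C.size}
    (hnp : ¬ NNFPure C A i) (ha : C.label i = .and)
    (h : ∃ j, j ∈ C.wires i ∧ ¬ NNFPure C A j) :
    ∃ c, c ∈ C.wires i ∧ ¬ NNFPure C A c ∧ selg C A σ i = selg C A σ c := by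
  refine ⟨h.choose, h.choose_spec.1, h.choose_spec.2, ?_⟩
  have hno : ¬ C.label i = GateLabel.or := by rw [ha]; intro hc; cases hc
  rw [selg, if_neg hnp, if_neg hno, if_pos ha, dif_pos h]

lemma selg_and_none {C : NNFCircuit W} {A : Finset W} {σ} {i : Fin C.size}
    (hnp : ¬ NNFPure C A i) (ha : C.label i = .and)
    (h : ¬ ∃ j, j ∈ C.wires i ∧ ¬ NNFPure C A j) :
    selg C A σ i = i := by
  have hno : ¬ C.label i = GateLabel.or := by rw [ha]; intro hc; cases hc
  rw [selg, if_neg hnp, if_neg hno, if_pos ha, dif_neg h]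

/-- The selector endpoint is accepted. -/
lemma eval_selg {C : NNFCircuit W} {A : Finset W} {σ} :
    ∀ (i : Fin C.size), C.eval σ i = true → C.eval σ (selg C A σ i) = true := by
  suffices H : ∀ n (i : Fin C.size), (i : ℕ) < n → C.eval σ i = true →
      C.eval σ (selg C A σ i) = true by
    intro i h; exact H ((i : ℕ) + 1) i (Nat.lt_succ_self _) h
  intro n
  induction n with
  | zero => intro i hi; exact absurd hi (Nat.not_lt_zero _)
  | succ n ih =>
    intro i hi he
    by_cases hp : NNFPure C A i
    · rw [selg_of_pure hp]; exact he
    cases hl : C.label i with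
    | lit x b => exact absurd (pure_of_lit hl) hp
    | const b => exact absurd (pure_of_const hl) hp
    | or =>
      obtain ⟨c, hcw, hce, hsel⟩ := selg_or_spec hp hl he
      · rw [hsel]; exact ih c (by have := C.wiresLt i c hcw; omega) hce
    | and =>
      by_cases h : ∃ j, j ∈ C.wires i ∧ ¬ NNFPure C A j
      · obtain ⟨c, hcw, _, hsel⟩ := selg_and_some hp hl h
        rw [hsel]
        exact ih c (by have := C.wiresLt i c hcw; omega)
          ((NNFCircuit.eval_and_iff C hl σ).mp he c hcw)
      · rw [selg_and_none hp hl h]; exact he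

end Aux3
section Aux4
variable {W : Type*} [DecidableEq W]

/-- Structural property of structured DNNFs: at an ∧-gate, if one child is
mixed w.r.t. the cut `A = s.leaves`, the other child's variables avoid `A`. -/
lemma and_split {C : NNFCircuit W} {T : VTree W} (hnd : T.leavesList.Nodup)
    (hresp : RespectsVtree C T) {s : VTree W} (hs : s ∈ T.subtrees)
    {i : Fin C.size} (hi : C.label i = .and) :
    ∃ a b, C.wires i = [a, b] ∧
      (¬ NNFPure C s.leaves a → ∀ x ∈ C.vars b, x ∉ s.leaves) ∧
      (¬ NNFPure C s.leaves b → ∀ x ∈ C.vars a, x ∉ s.leaves) := by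
  obtain ⟨l, r, hlr, a, b, hw, hva, hvb⟩ := hresp i hi
  obtain ⟨hl, hr⟩ := VTree.mem_subtrees_of_node hlr
  have hdis := VTree.node_leaves_disjoint hnd hlr
  refine ⟨a, b, hw, ?_, ?_⟩
  · intro hna x hxb hxA
    -- a mixed ⟹ s.leaves ⊆ l.leaves ⟹ r.leaves ∩ s.leaves = ∅
    have hAL : s.leaves ⊆ l.leaves := by
      rcases VTree.nested hnd s hs l hl with h | h | h
      · exact h
      · exact absurd (Or.inl (hva.trans h)) hna
      · exact absurd (Or.inr fun y hy hyA => h y (hva hy) hyA) hna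
    exact hdis x (hAL hxA) (hvb hxb)
  · intro hnb x hxa hxA
    have hAR : s.leaves ⊆ r.leaves := by
      rcases VTree.nested hnd s hs r hr with h | h | h
      · exact h
      · exact absurd (Or.inl (hvb.trans h)) hnb
      · exact absurd (Or.inr fun y hy hyA => h y (hvb hy) hyA) hnb
    exact hdis x (hva hxa) (hAR hxA)
end Aux4
section Aux5
variable {W : Type*} [DecidableEq W]

/-- The key "rectangle" property of structured DNNFs: if two accepted inputs
have the same selector endpoint, then the mixed input (σ on A, τ off A) is
also accepted. -/
lemma mix_accepted {C : NNFCircuit W} {T : VTree W} (hnd : T.leavesList.Nodup)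
    (hresp : RespectsVtree C T) {s : VTree W} (hs : s ∈ T.subtrees)
    (σ τ : W → Bool) {i : Fin C.size} (hσ : C.eval σ i = true) :
    ∀ (j : Fin C.size), C.eval τ j = true →
      selg C s.leaves σ i = selg C s.leaves τ j →
      C.eval (fun x => if x ∈ s.leaves then σ x else τ x) j = true := by
  set A := s.leaves with hA
  set μ : W → Bool := fun x => if x ∈ A then σ x else τ x with hμ
  have hμσ : ∀ (c : Fin C.size), C.vars c ⊆ A → C.eval μ c = C.eval σ c := by
    intro c hc
    exact NNFCircuit.eval_congr C c fun x hx => by simp [hμ, hc hx]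
  have hμτ : ∀ (c : Fin C.size), (∀ x ∈ C.vars c, x ∉ A) → C.eval μ c = C.eval τ c := by
    intro c hc
    exact NNFCircuit.eval_congr C c fun x hx => by simp [hμ, hc x hx]
  suffices H : ∀ n (j : Fin C.size), (j : ℕ) < n → C.eval τ j = true →
      selg C A σ i = selg C A τ j → C.eval μ j = true by
    intro j h1 h2; exact H ((j : ℕ) + 1) j (Nat.lt_succ_self _) h1 h2
  intro n
  induction n with
  | zero => intro j hj; exact absurd hj (Nat.not_lt_zero _)
  | succ n ih =>
    intro j hj hτ hsel
    by_cases hp : NNFPure C A j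
    · rcases hp with hp | hp
      · -- pure-A: value comes from σ; selector endpoint is j itself
        rw [selg_of_pure (Or.inl hp)] at hsel
        rw [hμσ j hp]
        have := eval_selg (A := A) i hσ
        rw [hsel] at this
        exact this
      · rw [hμτ j hp]; exact hτ
    cases hl : C.label j with
    | lit x b => exact absurd (pure_of_lit hl) hp
    | const b => exact absurd (pure_of_const hl) hp
    | or =>
      obtain ⟨c, hcw, hce, hs2⟩ := selg_or_spec hp hl hτ
      rw [hs2] at hsel
      have := ih c (by have := C.wiresLt j c hcw; omega) hce hsel
      exact (NNFCircuit.eval_or_iff C hl μ).mpr ⟨c, hcw, this⟩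
    | and =>
      obtain ⟨a, b, hw, hab, hba⟩ := and_split hnd hresp hs hl
      have hea : C.eval τ a = true := (NNFCircuit.eval_and_iff C hl τ).mp hτ a (by simp [hw])
      have heb : C.eval τ b = true := (NNFCircuit.eval_and_iff C hl τ).mp hτ b (by simp [hw])
      by_cases h : ∃ c, c ∈ C.wires j ∧ ¬ NNFPure C A c
      · obtain ⟨c, hcw, hcnp, hs2⟩ := selg_and_some hp hl h
        rw [hs2] at hsel
        have hcτ : C.eval τ c = true := (NNFCircuit.eval_and_iff C hl τ).mp hτ c hcw
        have hμc : C.eval μ c = true := ih c (by have := C.wiresLt j c hcw; omega) hcτ hsel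
        -- the other child is pure-B
        refine (NNFCircuit.eval_and_iff C hl μ).mpr ?_
        intro d hdw
        rw [hw] at hdw hcw
        rcases List.mem_pair.mp hcw with rfl | rfl
        · rcases List.mem_pair.mp hdw with rfl | rfl
          · exact hμc
          · rw [hμτ d (hab hcnp)]; exact heb
        · rcases List.mem_pair.mp hdw with rfl | rfl
          · rw [hμτ d (hba hcnp)]; exact hea
          · exact hμc
      · -- both children pure; the endpoint is j itself, so σ also accepts j
        rw [selg_and_none hp hl h] at hsel
        push_neg at h
        have hσj : C.eval σ j = true := by
          have := eval_selg (A := A) i hσ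
          rw [hsel] at this; exact this
        refine (NNFCircuit.eval_and_iff C hl μ).mpr ?_
        intro d hdw
        rcases h d hdw with hd | hd
        · rw [hμσ d hd]; exact (NNFCircuit.eval_and_iff C hl σ).mp hσj d hdw
        · rw [hμτ d hd]; exact (NNFCircuit.eval_and_iff C hl τ).mp hτ d hdw
      
end Aux5
section Aux6
variable {V : Type*} [DecidableEq V]

open Classical in
/-- The fooling assignment associated with a sub-matching `S ⊆ M'`. -/
noncomputable def matchAsg (M' S : Finset ((V ⊕ Finset V) × (V ⊕ Finset V)))
    (z : V ⊕ Finset V) : Bool :=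
  if ∃ p ∈ M', p.1 = z then decide (∃ p ∈ S, p.1 = z)
  else if ∃ p ∈ M', p.2 = z then decide (∀ p ∈ S, p.2 ≠ z)
  else z.isRight

section MatchAsg

variable {F : Finset (Finset V)} {A : Finset (V ⊕ Finset V)}
variable {M' S S' : Finset ((V ⊕ Finset V) × (V ⊕ Finset V))}

-- Standing hypotheses
variable (hmem : ∀ p ∈ M', p.1 ∈ A ∧ p.2 ∉ A ∧ IncAdj F p.1 p.2)
variable (hdist : ∀ p ∈ M', ∀ q ∈ M', p ≠ q → p.1 ≠ q.1 ∧ p.2 ≠ q.2)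

include hmem hdist

lemma matchAsg_fst (hS : S ⊆ M') {p} (hp : p ∈ M') :
    matchAsg M' S p.1 = decide (p ∈ S) := by
  rw [matchAsg, if_pos ⟨p, hp, rfl⟩]
  congr 1
  apply propext
  constructor
  · rintro ⟨q, hq, hq1⟩
    by_cases hpq : q = p
    · subst hpq; exact hq
    · exact absurd hq1 (hdist q (hS hq) p hp hpq).1
  · intro h; exact ⟨p, h, rfl⟩

lemma matchAsg_snd (hS : S ⊆ M') {p} (hp : p ∈ M') :
    matchAsg M' S p.2 = decide (p ∉ S) := by
  have h1 : ¬ ∃ q ∈ M', q.1 = p.2 := by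
    rintro ⟨q, hq, hq1⟩
    exact (hmem p hp).2.1 (hq1 ▸ (hmem q hq).1)
  rw [matchAsg, if_neg h1, if_pos ⟨p, hp, rfl⟩]
  congr 1
  apply propext
  constructor
  · intro h hps; exact h p hps rfl
  · intro h q hq hq2
    by_cases hpq : q = p
    · subst hpq; exact h hq
    · exact absurd hq2 (hdist q (hS hq) p hp hpq).2

lemma matchAsg_other {z} (h1 : ∀ p ∈ M', p.1 ≠ z) (h2 : ∀ p ∈ M', p.2 ≠ z) :
    matchAsg M' S z = z.isRight := by
  rw [matchAsg, if_neg, if_neg]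
  · rintro ⟨p, hp, hpz⟩; exact h2 p hp hpz
  · rintro ⟨p, hp, hpz⟩; exact h1 p hp hpz

variable (hadjshape : ∀ p ∈ M', IncAdj F p.1 p.2)

/-- Every fooling assignment satisfies `F̂`. -/
lemma matchAsg_sat (hS : S ⊆ M') :
    ∀ K ∈ F, matchAsg M' S (Sum.inr K) = true ∨
      ∃ v ∈ K, matchAsg M' S (Sum.inl v) = true := by
  intro K hK
  by_cases h2 : ∃ p ∈ M', p.2 = Sum.inr K
  · obtain ⟨p, hp, hp2⟩ := h2
    obtain ⟨v, K', hK', hvK', hshape⟩ := (hmem p hp).2.2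
    rcases hshape with ⟨he1, he2⟩ | ⟨he1, he2⟩
    · -- p.1 = inl v, p.2 = inr K' = inr K
      have hKK : K' = K := by rw [hp2] at he2; exact (Sum.inr.inj he2.symm)
      subst hKK
      by_cases hps : p ∈ S
      · refine Or.inr ⟨v, hvK', ?_⟩
        rw [← he1, matchAsg_fst hmem hdist hS hp]
        simpa
      · refine Or.inl ?_
        rw [← hp2, matchAsg_snd hmem hdist hS hp]
        simpa
    · rw [hp2] at he2; cases he2
  · by_cases h1 : ∃ p ∈ M', p.1 = Sum.inr K
    · obtain ⟨p, hp, hp1⟩ := h1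
      obtain ⟨v, K', hK', hvK', hshape⟩ := (hmem p hp).2.2
      rcases hshape with ⟨he1, he2⟩ | ⟨he1, he2⟩
      · rw [hp1] at he1; cases he1
      · have hKK : K' = K := by rw [hp1] at he1; exact (Sum.inr.inj he1.symm)
        subst hKK
        by_cases hps : p ∈ S
        · refine Or.inl ?_
          rw [← hp1, matchAsg_fst hmem hdist hS hp]
          simpa
        · refine Or.inr ⟨v, hvK', ?_⟩
          rw [← he2, matchAsg_snd hmem hdist hS hp]
          simpa
    · refine Or.inl ?_
      rw [matchAsg_other hmem hdist (fun p hp hc => h1 ⟨p, hp, hc⟩)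
        (fun p hp hc => h2 ⟨p, hp, hc⟩)]
      rfl

end MatchAsg
end Aux6
section Aux7
variable {V : Type*} [DecidableEq V]
variable {F : Finset (Finset V)} {A : Finset (V ⊕ Finset V)}
variable {M' S S' : Finset ((V ⊕ Finset V) × (V ⊕ Finset V))}

/-- The mixed assignment falsifies some clause of `F̂`. -/
lemma matchAsg_falsify
    (hmem : ∀ p ∈ M', p.1 ∈ A ∧ p.2 ∉ A ∧ IncAdj F p.1 p.2)
    (hdist : ∀ p ∈ M', ∀ q ∈ M', p ≠ q → p.1 ≠ q.1 ∧ p.2 ≠ q.2)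
    (hind : ∀ p ∈ M', ∀ q ∈ M', p ≠ q → ¬ IncAdj F p.1 q.2 ∧ ¬ IncAdj F q.1 p.2)
    (hunif : (∀ q ∈ M', (∃ v, q.1 = Sum.inl v) ∧ (∃ K, q.2 = Sum.inr K)) ∨
             (∀ q ∈ M', (∃ K, q.1 = Sum.inr K) ∧ (∃ v, q.2 = Sum.inl v)))
    (hS : S ⊆ M') (hS' : S' ⊆ M') {p} (hp : p ∈ M') (hpS : p ∉ S) (hpS' : p ∈ S') :
    ∃ K ∈ F,
      (if (Sum.inr K : V ⊕ Finset V) ∈ A then matchAsg M' S (Sum.inr K)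
        else matchAsg M' S' (Sum.inr K)) = false ∧
      ∀ v ∈ K,
        (if (Sum.inl v : V ⊕ Finset V) ∈ A then matchAsg M' S (Sum.inl v)
          else matchAsg M' S' (Sum.inl v)) = false := by
  obtain ⟨hp1A, hp2A, v₀, K₀, hK₀, hv₀, hshape⟩ := hmem p hp
  rcases hshape with ⟨he1, he2⟩ | ⟨he1, he2⟩
  · -- orientation A: p.1 = inl v₀ ∈ A, p.2 = inr K₀ ∉ A
    have huA : ∀ q ∈ M', (∃ v, q.1 = Sum.inl v) ∧ (∃ K, q.2 = Sum.inr K) := by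
      rcases hunif with h | h
      · exact h
      · obtain ⟨⟨K, hK⟩, _⟩ := h p hp
        rw [he1] at hK; cases hK
    refine ⟨K₀, hK₀, ?_, ?_⟩
    · rw [if_neg (he2 ▸ hp2A), ← he2, matchAsg_snd hmem hdist hS' hp]
      simpa using hpS'
    · intro v hv
      by_cases hvA : (Sum.inl v : V ⊕ Finset V) ∈ A
      · rw [if_pos hvA]
        by_cases h1 : ∃ q ∈ M', q.1 = Sum.inl v
        · obtain ⟨q, hq, hq1⟩ := h1
          by_cases hpq : q = p
          · subst hpq
            rw [← hq1, matchAsg_fst hmem hdist hS hq]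
            simpa using hpS
          · exfalso
            refine (hind p hp q hq (Ne.symm hpq)).2 ⟨v, K₀, hK₀, hv, Or.inl ⟨hq1, he2⟩⟩
        · rw [matchAsg_other hmem hdist (fun q hq hc => h1 ⟨q, hq, hc⟩)
            (fun q hq hc => (hmem q hq).2.1 (hc ▸ hvA))]
          rfl
      · rw [if_neg hvA]
        rw [matchAsg_other hmem hdist (fun q hq hc => hvA (by rw [← hc]; exact (hmem q hq).1))
          (fun q hq hc => by obtain ⟨_, K, hK⟩ := huA q hq; rw [hc] at hK; cases hK)]
        rfl
  · -- orientation B: p.1 = inr K₀ ∈ A, p.2 = inl v₀ ∉ A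
    have huB : ∀ q ∈ M', (∃ K, q.1 = Sum.inr K) ∧ (∃ v, q.2 = Sum.inl v) := by
      rcases hunif with h | h
      · obtain ⟨⟨v, hvq⟩, _⟩ := h p hp
        rw [he1] at hvq; cases hvq
      · exact h
    refine ⟨K₀, hK₀, ?_, ?_⟩
    · rw [if_pos (he1 ▸ hp1A), ← he1, matchAsg_fst hmem hdist hS hp]
      simpa using hpS
    · intro v hv
      by_cases hvA : (Sum.inl v : V ⊕ Finset V) ∈ A
      · rw [if_pos hvA]
        rw [matchAsg_other hmem hdist
          (fun q hq hc => by obtain ⟨⟨K, hK⟩, _⟩ := huB q hq; rw [hc] at hK; cases hK)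
          (fun q hq hc => (hmem q hq).2.1 (hc ▸ hvA))]
        rfl
      · rw [if_neg hvA]
        by_cases h2 : ∃ q ∈ M', q.2 = Sum.inl v
        · obtain ⟨q, hq, hq2⟩ := h2
          by_cases hpq : q = p
          · subst hpq
            rw [← hq2, matchAsg_snd hmem hdist hS' hq]
            simpa using hpS'
          · exfalso
            exact (hind p hp q hq (Ne.symm hpq)).1 ⟨v, K₀, hK₀, hv, Or.inr ⟨he1, hq2⟩⟩
        · rw [matchAsg_other hmem hdist (fun q hq hc => hvA (by rw [← hc]; exact (hmem q hq).1))
            (fun q hq hc => h2 ⟨q, hq, hc⟩)]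
          rfl

end Aux7
section Aux8
variable {V : Type*} [DecidableEq V]

lemma main_aux_s19 (F : Finset (Finset V)) (D : NNFCircuit (V ⊕ Finset V))
    {T : VTree (V ⊕ Finset V)} (hnd : T.leavesList.Nodup) (hresp : RespectsVtree D T)
    {s : VTree (V ⊕ Finset V)} (hs : s ∈ T.subtrees)
    (heval : ∀ σ : V ⊕ Finset V → Bool,
      (D.eval σ D.output = true ↔
        ∀ K ∈ F, σ (Sum.inr K) = true ∨ ∃ v ∈ K, σ (Sum.inl v) = true))
    (M' : Finset ((V ⊕ Finset V) × (V ⊕ Finset V)))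
    (hmem : ∀ p ∈ M', p.1 ∈ s.leaves ∧ p.2 ∉ s.leaves ∧ IncAdj F p.1 p.2)
    (hdist : ∀ p ∈ M', ∀ q ∈ M', p ≠ q → p.1 ≠ q.1 ∧ p.2 ≠ q.2)
    (hind : ∀ p ∈ M', ∀ q ∈ M', p ≠ q → ¬ IncAdj F p.1 q.2 ∧ ¬ IncAdj F q.1 p.2)
    (hunif : (∀ q ∈ M', (∃ v, q.1 = Sum.inl v) ∧ (∃ K, q.2 = Sum.inr K)) ∨
             (∀ q ∈ M', (∃ K, q.1 = Sum.inr K) ∧ (∃ v, q.2 = Sum.inl v))) :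
    2 ^ M'.card ≤ D.size := by
  have hsat : ∀ S, S ⊆ M' → D.eval (matchAsg M' S) D.output = true := fun S hS =>
    (heval _).mpr (matchAsg_sat hmem hdist hS)
  set f : Finset ((V ⊕ Finset V) × (V ⊕ Finset V)) → Fin D.size :=
    fun S => selg D s.leaves (matchAsg M' S) D.output with hf
  have key : ∀ S S', S ⊆ M' → S' ⊆ M' → f S = f S' →
      ∀ p ∈ M', p ∉ S → p ∈ S' → False := by
    intro S S' hS hS' hfe p hp hpS hpS'
    have hmix := mix_accepted hnd hresp hs (matchAsg M' S) (matchAsg M' S')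
      (hsat S hS) D.output (hsat S' hS') hfe
    have hall := (heval _).mp hmix
    obtain ⟨K, hK, h1, h2⟩ := matchAsg_falsify hmem hdist hind hunif hS hS' hp hpS hpS'
    rcases hall K hK with hc | ⟨v, hv, hc⟩
    · rw [hc] at h1; cases h1
    · have := h2 v hv; rw [hc] at this; cases this
  have hinj : Set.InjOn f ↑M'.powerset := by
    intro S hS S' hS' hfe
    rw [Finset.coe_powerset, Set.mem_preimage, Set.mem_powerset_iff,
      Finset.coe_subset] at hS hS'
    by_contra hne
    by_cases hss : S ⊆ S'
    · have hns : ¬ S' ⊆ S := fun h => hne (Finset.Subset.antisymm hss h)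
      obtain ⟨p, hp1, hp2⟩ := Finset.not_subset.mp hns
      exact key S S' hS hS' hfe p (hS' hp1) hp2 hp1
    · obtain ⟨p, hp1, hp2⟩ := Finset.not_subset.mp hss
      exact key S' S hS' hS hfe.symm p (hS hp1) hp2 hp1
  have hcard : M'.powerset.card ≤ (Finset.univ : Finset (Fin D.size)).card :=
    Finset.card_le_card_of_injOn f (fun _ _ => Finset.mem_univ _) hinj
  rwa [Finset.card_powerset, Finset.card_univ, Fintype.card_fin] at hcard

end Aux8

/-- If the incidence graph of a monotone CNF `F` has MIM-width `k`, then every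
structured DNNF computing `F̂` (the formula obtained by adding a fresh indicator
variable `Sum.inr K` to each clause `K`) has size at least `2^(k/2)`. -/
theorem structured_dnnf_lower_bound {V : Type*} [DecidableEq V]
    (F : Finset (Finset V)) (k : ℕ)
    -- the incidence graph of `F` has MIM-width `k`:
    (hmim_lb : ∀ T : VTree (V ⊕ Finset V), IsBranchDecomp F T →
      ∃ s ∈ T.subtrees, ∃ M, IsInducedMatching F s.leaves M ∧ k ≤ M.card)
    (hmim_ub : ∃ T : VTree (V ⊕ Finset V), IsBranchDecomp F T ∧
      ∀ s ∈ T.subtrees, ∀ M, IsInducedMatching F s.leaves M → M.card ≤ k)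
    -- `D` is a DNNF over the variables of `F̂` …
    (D : NNFCircuit (V ⊕ Finset V)) (hD : D.IsDNNF)
    (hvars : D.vars D.output ⊆ IncVerts F)
    -- … which is structured …
    (hstruct : ∃ T : VTree (V ⊕ Finset V),
      T.leavesList.Nodup ∧ T.leaves = IncVerts F ∧ RespectsVtree D T)
    -- … and computes `F̂`:
    (heval : ∀ σ : V ⊕ Finset V → Bool,
      (D.eval σ D.output = true ↔
        ∀ K ∈ F, σ (Sum.inr K) = true ∨ ∃ v ∈ K, σ (Sum.inl v) = true)) :
    (2 : ℝ) ^ ((k : ℝ) / 2) ≤ (D.size : ℝ) := by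
  
  classical
  obtain ⟨T, hnd, hleaves, hresp⟩ := hstruct
  obtain ⟨s, hs, M, hM, hkM⟩ := hmim_lb T ⟨hnd, hleaves⟩
  obtain ⟨hM1, hM2⟩ := hM
  set M₁ := M.filter (fun p => p.1.isLeft = true) with hM₁
  set M₂ := M.filter (fun p => ¬ (p.1.isLeft = true)) with hM₂
  have hsplitcard : M₁.card + M₂.card = M.card :=
    Finset.card_filter_add_card_filter_not
      (s := M) (p := fun q : (V ⊕ Finset V) × (V ⊕ Finset V) => q.1.isLeft = true)
  have hshape : ∀ p ∈ M,
      (p.1.isLeft = true → (∃ v, p.1 = Sum.inl v) ∧ (∃ K, p.2 = Sum.inr K)) ∧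
      (¬ (p.1.isLeft = true) → (∃ K, p.1 = Sum.inr K) ∧ (∃ v, p.2 = Sum.inl v)) := by
    intro p hp
    obtain ⟨_, _, _, v, K, hK, hv, hsh⟩ := hM1 p hp
    rcases hsh with ⟨h1, h2⟩ | ⟨h1, h2⟩
    · refine ⟨fun _ => ⟨⟨v, h1⟩, ⟨K, h2⟩⟩, fun hc => ?_⟩
      rw [h1] at hc; simp at hc
    · refine ⟨fun hc => ?_, fun _ => ⟨⟨K, h1⟩, ⟨v, h2⟩⟩⟩
      rw [h1] at hc; simp at hc
  have hmain : ∃ M' : Finset ((V ⊕ Finset V) × (V ⊕ Finset V)), M' ⊆ M ∧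
      k ≤ 2 * M'.card ∧
      ((∀ q ∈ M', (∃ v, q.1 = Sum.inl v) ∧ (∃ K, q.2 = Sum.inr K)) ∨
       (∀ q ∈ M', (∃ K, q.1 = Sum.inr K) ∧ (∃ v, q.2 = Sum.inl v))) := by
    rcases le_total M₁.card M₂.card with h | h
    · refine ⟨M₂, Finset.filter_subset _ _, by omega, Or.inr fun q hq => ?_⟩
      have hq' := Finset.mem_filter.mp hq
      exact (hshape q hq'.1).2 hq'.2
    · refine ⟨M₁, Finset.filter_subset _ _, by omega, Or.inl fun q hq => ?_⟩
      have hq' := Finset.mem_filter.mp hq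
      exact (hshape q hq'.1).1 hq'.2
  obtain ⟨M', hM'sub, hk2, hunif⟩ := hmain
  have hsize : 2 ^ M'.card ≤ D.size := by
    refine main_aux_s19 F D hnd hresp hs heval M'
      (fun p hp => ?_) (fun p hp q hq hne => ?_) (fun p hp q hq hne => ?_) hunif
    · obtain ⟨h1, _, h3, h4⟩ := hM1 p (hM'sub hp); exact ⟨h1, h3, h4⟩
    · obtain ⟨h1, h2, _, _⟩ := hM2 p (hM'sub hp) q (hM'sub hq) hne; exact ⟨h1, h2⟩
    · obtain ⟨_, _, h3, h4⟩ := hM2 p (hM'sub hp) q (hM'sub hq) hne; exact ⟨h3, h4⟩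
  have hkm : (k : ℝ) / 2 ≤ ((M'.card : ℕ) : ℝ) := by
    have : (k : ℝ) ≤ 2 * (M'.card : ℝ) := by exact_mod_cast hk2
    linarith
  calc (2 : ℝ) ^ ((k : ℝ) / 2)
      ≤ (2 : ℝ) ^ ((M'.card : ℕ) : ℝ) :=
        Real.rpow_le_rpow_of_exponent_le one_le_two hkm
    _ = (2 : ℝ) ^ (M'.card : ℕ) := Real.rpow_natCast 2 _
    _ = ((2 ^ M'.card : ℕ) : ℝ) := by push_cast; ring
    _ ≤ (D.size : ℝ) := Nat.cast_le.mpr hsize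
end
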